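/- If (x*, ζ*, β*) minimizes F(x,ζ,β) = (1/2)Σᵢ[ζᵢ Aᵢ(x)² + βᵢ Gᵢ(x)²] over x ∈ X and (ζ,β) with ζᵢ, βᵢ > 0 and ζᵢβᵢ ≥ 1, where Gᵢ(x) = 1/Bᵢ(x), then x* minimizes H(x) = Σᵢ Aᵢ(x)/Bᵢ(x) over X, and H(x*) = F(x*, ζ*, β*). -/

import Mathlib

lemma key_amgm (a g ζ β : ℝ) (ha : 0 < a) (hg : 0 < g) (hζ : 0 < ζ)
    (hβ : 0 < β) (h : 1 ≤ ζ * β) : 2 * (a * g) ≤ ζ * a ^ 2 + β * g ^ 2 := by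
  nlinarith [sq_nonneg (ζ * a - g), mul_pos ha hg, sq_nonneg a, sq_nonneg g]

theorem stmt_2 {X : Type*} [Nonempty X] (m : ℕ)
    (A B : Fin m → X → ℝ)
    (hA : ∀ i x, 0 < A i x) (hB : ∀ i x, 0 < B i x)
    (F : X → (Fin m → ℝ) → (Fin m → ℝ) → ℝ)
    (hF : ∀ x ζ β, F x ζ β =
        (1/2) * ∑ i, (ζ i * (A i x)^2 + β i * (1 / B i x)^2))
    (H : X → ℝ) (hH : ∀ x, H x = ∑ i, A i x / B i x)
    (xs : X) (ζs βs : Fin m → ℝ)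
    (hfeas : ∀ i, 0 < ζs i ∧ 0 < βs i ∧ 1 ≤ ζs i * βs i)
    (hmin : ∀ x (ζ β : Fin m → ℝ),
        (∀ i, 0 < ζ i ∧ 0 < β i ∧ 1 ≤ ζ i * β i) →
        F xs ζs βs ≤ F x ζ β) :
    (∀ x, H xs ≤ H x) ∧ H xs = F xs ζs βs := by
  -- lower bound: H x ≤ F x ζ β for any feasible (ζ, β)
  have hlow : ∀ (x : X) (ζ β : Fin m → ℝ),
      (∀ i, 0 < ζ i ∧ 0 < β i ∧ 1 ≤ ζ i * β i) → H x ≤ F x ζ β := by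
    intro x ζ β hfe
    rw [hH, hF]
    have : ∑ i, A i x / B i x = (1/2) * ∑ i, 2 * (A i x * (1 / B i x)) := by
      rw [Finset.mul_sum]
      refine Finset.sum_congr rfl fun i _ => ?_
      field_simp
    rw [this]
    have h2 : (0:ℝ) < 1/2 := by norm_num
    apply mul_le_mul_of_nonneg_left _ (le_of_lt h2)
    apply Finset.sum_le_sum
    intro i _
    exact key_amgm _ _ _ _ (hA i x) (one_div_pos.mpr (hB i x)) (hfe i).1 (hfe i).2.1 (hfe i).2.2
  -- upper bound: F xs ζs βs ≤ H x for all x, using optimal multipliers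
  have hup : ∀ x : X, F xs ζs βs ≤ H x := by
    intro x
    set ζx : Fin m → ℝ := fun i => 1 / (A i x * B i x) with hζx
    set βx : Fin m → ℝ := fun i => A i x * B i x with hβx
    have hfe : ∀ i, 0 < ζx i ∧ 0 < βx i ∧ 1 ≤ ζx i * βx i := by
      intro i
      have h1 : 0 < A i x * B i x := mul_pos (hA i x) (hB i x)
      refine ⟨by simpa [hζx] using one_div_pos.mpr h1, h1, ?_⟩
      rw [hζx, hβx]
      field_simp
      exact (div_self h1.ne').ge
    have := hmin x ζx βx hfe
    have heq : F x ζx βx = H x := by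
      rw [hF, hH]
      have : ∑ i, (ζx i * A i x ^ 2 + βx i * (1 / B i x) ^ 2)
          = ∑ i, 2 * (A i x / B i x) := by
        refine Finset.sum_congr rfl fun i _ => ?_
        have hAi := (hA i x).ne'
        have hBi := (hB i x).ne'
        simp only [hζx, hβx]
        field_simp
        ring
      rw [this, Finset.mul_sum]
      rw [← Finset.sum_congr rfl fun i _ => (by ring : (1/2 : ℝ) * (2 * (A i x / B i x)) = A i x / B i x)]
    linarith [heq ▸ this]
  have h1 : H xs ≤ F xs ζs βs := hlow xs ζs βs hfeas
  exact ⟨fun x => le_trans h1 (hup x), le_antisymm h1 (hup xs)⟩
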